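/- Let K ⊆ ℝⁿ be a convex body with K ⊆ R·B_∞, and let C and G be the coordinate Hit-and-Run and Gaussian Markov schemes on K (Gaussian step variance σ², 0 < σ). Then for every measurable S ⊆ K, Φ_{C,π_K}(S, K\S) ≥ (σ√π/(R√2)) · Φ_{G,π_K}(S, K\S). -/

import Mathlib

open MeasureTheory ProbabilityTheory
open scoped ENNReal NNReal

/-- The set of parameters `t` such that `v + t eᵢ` lies in `K` (the axis-parallel chord of
`K` through `v` in direction `i`, in chord coordinates). -/
def chordSet {n : ℕ} (K : Set (Fin n → ℝ)) (v : Fin n → ℝ) (i : Fin n) : Set ℝ :=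
  {t : ℝ | v + t • (Pi.single i 1 : Fin n → ℝ) ∈ K}

/-- One step of coordinate Hit-and-Run from `v`: pick `i ∈ [n]` uniformly, then a uniform
point on the chord `K ∩ (v + ℝ eᵢ)`. -/
noncomputable def chrMeasure {n : ℕ} (K : Set (Fin n → ℝ)) (v : Fin n → ℝ) :
    Measure (Fin n → ℝ) :=
  (n : ℝ≥0∞)⁻¹ • ∑ i : Fin n, (volume (chordSet K v i))⁻¹ •
    Measure.map (fun t : ℝ => v + t • (Pi.single i 1 : Fin n → ℝ)) (volume.restrict (chordSet K v i))

/-- One step of the Gaussian walk from `v` with step variance `σ²`: pick `i ∈ [n]` uniformly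
and `κ ~ N(0,σ²)`; move to `v + κ eᵢ` if it lies in `K`, otherwise stay at `v`. -/
noncomputable def gaussStepMeasure {n : ℕ} (K : Set (Fin n → ℝ)) (σ : ℝ) (v : Fin n → ℝ) :
    Measure (Fin n → ℝ) :=
  (n : ℝ≥0∞)⁻¹ • ∑ i : Fin n,
    (Measure.map (fun t : ℝ => v + t • (Pi.single i 1 : Fin n → ℝ))
        ((gaussianReal 0 (Real.toNNReal (σ ^ 2))).restrict (chordSet K v i))
      + gaussianReal 0 (Real.toNNReal (σ ^ 2)) (chordSet K v i)ᶜ • Measure.dirac v)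

/-- The Gaussian density with variance `σ²` is bounded by `(σ√(2π))⁻¹`. -/
lemma gaussPDF_le_aux (σ : ℝ) (hσ : 0 < σ) (x : ℝ) :
    gaussianPDF 0 (Real.toNNReal (σ^2)) x ≤ ENNReal.ofReal (σ * Real.sqrt (2 * Real.pi))⁻¹ := by
  unfold gaussianPDF gaussianPDFReal
  apply ENNReal.ofReal_le_ofReal
  have hc : ((Real.toNNReal (σ^2) : ℝ≥0) : ℝ) = σ^2 := Real.coe_toNNReal _ (sq_nonneg σ)
  rw [hc]
  have h1 : Real.sqrt (2 * Real.pi * σ^2) = Real.sqrt (2 * Real.pi) * σ := by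
    rw [Real.sqrt_mul (by positivity), Real.sqrt_sq hσ.le]
  rw [h1, mul_comm (Real.sqrt (2*Real.pi)) σ]
  have he : Real.exp (-(x-0)^2/(2*(σ^2))) ≤ 1 :=
    Real.exp_le_one_iff.2 (div_nonpos_of_nonpos_of_nonneg (neg_nonpos.2 (sq_nonneg _)) (by positivity))
  calc (σ * Real.sqrt (2*Real.pi))⁻¹ * Real.exp (-(x-0)^2/(2*(σ^2)))
      ≤ (σ * Real.sqrt (2*Real.pi))⁻¹ * 1 := by gcongr
    _ = _ := mul_one _

lemma const_arith_aux (σ R : ℝ) (hσ : 0 < σ) (hR : 1 ≤ R) :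
    σ * Real.sqrt Real.pi / (R * Real.sqrt 2) * (σ * Real.sqrt (2 * Real.pi))⁻¹ = (2 * R)⁻¹ := by
  have h2 : Real.sqrt (2 * Real.pi) = Real.sqrt 2 * Real.sqrt Real.pi := Real.sqrt_mul (by norm_num) _
  have hπ : (0:ℝ) < Real.sqrt Real.pi := Real.sqrt_pos.2 Real.pi_pos
  have hs2 : (0:ℝ) < Real.sqrt 2 := Real.sqrt_pos.2 (by norm_num)
  have hR0 : (0:ℝ) < R := lt_of_lt_of_le one_pos hR
  rw [h2]
  field_simp
  linear_combination (-1) * (Real.sq_sqrt (by norm_num : (0:ℝ) ≤ 2))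

/-- If the convex body `K` satisfies `K ⊆ R·B_∞`, then for every measurable
`S ⊆ K` the ergodic flow (w.r.t. the uniform distribution `π_K`) of coordinate Hit-and-Run
from `S` to `K \ S` is at least `σ√π/(R√2)` times that of the Gaussian walk. -/
theorem chr_flow_ge_gaussian_flow (n : ℕ) (K : Set (Fin n → ℝ))
    (hKconv : Convex ℝ K) (hKmeas : MeasurableSet K)
    (R : ℝ) (hR : 1 ≤ R) (hKR : K ⊆ Metric.closedBall 0 R)
    (σ : ℝ) (hσ : 0 < σ)
    (S : Set (Fin n → ℝ)) (hS : MeasurableSet S) (hSK : S ⊆ K) :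
    ENNReal.ofReal (σ * Real.sqrt Real.pi / (R * Real.sqrt 2)) *
        ∫⁻ v in S, gaussStepMeasure K σ v (K \ S) ∂((volume K)⁻¹ • volume.restrict K)
      ≤ ∫⁻ v in S, chrMeasure K v (K \ S) ∂((volume K)⁻¹ • volume.restrict K) := by
  set ν := Real.toNNReal (σ^2) with hνdef
  have hν : ν ≠ 0 := by
    have : (0:ℝ) < σ^2 := by positivity
    simp [hνdef, Real.toNNReal_eq_zero, not_le, this, hσ.ne']
  set c := ENNReal.ofReal (σ * Real.sqrt Real.pi / (R * Real.sqrt 2)) with hcdef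
  have hc_ne : c ≠ ⊤ := ENNReal.ofReal_ne_top
  set A := K \ S with hAdef
  have hAmeas : MeasurableSet A := hKmeas.diff hS
  have hAK : A ⊆ K := Set.diff_subset
  have hR0 : (0:ℝ) < R := lt_of_lt_of_le one_pos hR
  have key : ∀ v ∈ S, c * gaussStepMeasure K σ v A ≤ chrMeasure K v A := by
    intro v hv
    have hvA : v ∉ A := fun h => h.2 hv
    have hterm : ∀ i : Fin n,
        c * (Measure.map (fun t : ℝ => v + t • (Pi.single i 1 : Fin n → ℝ))
              ((gaussianReal 0 ν).restrict (chordSet K v i))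
            + gaussianReal 0 ν (chordSet K v i)ᶜ • Measure.dirac v) A
        ≤ ((volume (chordSet K v i))⁻¹ •
            Measure.map (fun t : ℝ => v + t • (Pi.single i 1 : Fin n → ℝ))
              (volume.restrict (chordSet K v i))) A := by
      intro i
      set f : ℝ → (Fin n → ℝ) := fun t => v + t • (Pi.single i 1 : Fin n → ℝ) with hfdef
      have hfm : Measurable f := Measurable.const_add (measurable_id.smul_const _) v
      have hCeq : chordSet K v i = f ⁻¹' K := rfl
      set C := chordSet K v i with hCdef
      have hCm : MeasurableSet C := hCeq ▸ hfm hKmeas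
      set T := f ⁻¹' A with hTdef
      have hTm : MeasurableSet T := hfm hAmeas
      have hTC : T ⊆ C := fun t ht => (hAK ht : f t ∈ K)
      have hL : (Measure.map f ((gaussianReal 0 ν).restrict C)
            + gaussianReal 0 ν Cᶜ • Measure.dirac v) A = gaussianReal 0 ν T := by
        rw [Measure.add_apply, Measure.smul_apply, Measure.map_apply hfm hAmeas,
          Measure.restrict_apply (hAmeas.preimage hfm), Set.inter_eq_left.2 hTC,
          Measure.dirac_apply' v hAmeas, Set.indicator_of_notMem hvA]
        simp
      have hRrhs : ((volume C)⁻¹ • Measure.map f (volume.restrict C)) A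
          = (volume C)⁻¹ * volume T := by
        rw [Measure.smul_apply, Measure.map_apply hfm hAmeas,
          Measure.restrict_apply (hAmeas.preimage hfm), Set.inter_eq_left.2 hTC, smul_eq_mul]
      rw [hL, hRrhs]
      have hg : gaussianReal 0 ν T
          ≤ ENNReal.ofReal (σ * Real.sqrt (2*Real.pi))⁻¹ * volume T := by
        rw [gaussianReal_apply 0 hν T]
        calc ∫⁻ x in T, gaussianPDF 0 ν x ∂volume
            ≤ ∫⁻ _ in T, ENNReal.ofReal (σ * Real.sqrt (2*Real.pi))⁻¹ ∂volume :=
              lintegral_mono fun x => gaussPDF_le_aux σ hσ x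
          _ = _ := by rw [setLIntegral_const]
      have hCle : volume C ≤ ENNReal.ofReal (2*R) := by
        have hsub : C ⊆ Set.Icc (-R - v i) (R - v i) := by
          intro t ht
          have h1 : f t ∈ Metric.closedBall (0 : Fin n → ℝ) R := hKR ht
          rw [mem_closedBall_zero_iff] at h1
          have h2 : |f t i| ≤ R := by
            have := norm_le_pi_norm (f t) i
            rw [Real.norm_eq_abs] at this
            exact this.trans h1
          have h3 : f t i = v i + t := by simp [hfdef]
          rw [h3, abs_le] at h2
          exact ⟨by linarith [h2.1], by linarith [h2.2]⟩
        calc volume C ≤ volume (Set.Icc (-R - v i) (R - v i)) := measure_mono hsub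
          _ = ENNReal.ofReal ((R - v i) - (-R - v i)) := Real.volume_Icc
          _ = ENNReal.ofReal (2*R) := by ring_nf
      calc c * gaussianReal 0 ν T
          ≤ c * (ENNReal.ofReal (σ * Real.sqrt (2*Real.pi))⁻¹ * volume T) :=
            mul_le_mul_right hg c
        _ = (ENNReal.ofReal (2*R))⁻¹ * volume T := by
            rw [← mul_assoc, hcdef, ← ENNReal.ofReal_mul (by positivity),
              const_arith_aux σ R hσ hR, ENNReal.ofReal_inv_of_pos (by positivity)]
        _ ≤ (volume C)⁻¹ * volume T :=
            mul_le_mul_left (ENNReal.inv_le_inv' hCle) _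
    simp only [gaussStepMeasure, chrMeasure, Measure.smul_apply, Measure.coe_finset_sum,
      Finset.sum_apply, smul_eq_mul, ← hνdef]
    rw [mul_left_comm]
    refine mul_le_mul_right ?_ _
    rw [Finset.mul_sum]
    exact Finset.sum_le_sum fun i _ => hterm i
  calc c * ∫⁻ v in S, gaussStepMeasure K σ v A ∂((volume K)⁻¹ • volume.restrict K)
      = ∫⁻ v in S, c * gaussStepMeasure K σ v A ∂((volume K)⁻¹ • volume.restrict K) :=
        (lintegral_const_mul' c _ hc_ne).symm
    _ ≤ ∫⁻ v in S, chrMeasure K v A ∂((volume K)⁻¹ • volume.restrict K) :=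
        lintegral_mono_ae ((ae_restrict_iff' hS).2 (ae_of_all _ key))
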